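/- Let ℓ,k ∈ ℤ with ℓ > 0 and ℓ dividing k(k−1). Then for every finite coloring ℕ = C_1 ∪ … ∪ C_r of the positive integers there exist an injective sequence (x_n)_{n=1}^∞ of positive integers and a color C_i such that 𝔖_{ℓ,k}(x_n)_{n=1}^∞ ⊆ C_i. -/

import Mathlib

/-- The value of the (ℓ,k)-symmetric polynomial 𝔖_{ℓ,k} on the family (x i)_{i ∈ F}. -/
def symVal (l k : ℤ) (x : ℕ → ℤ) (F : Finset ℕ) : ℤ :=
  (∑ G ∈ F.powerset.filter (fun G => G ≠ ∅),
      l ^ (G.card - 1) * k ^ (F.card - G.card) * ∏ i ∈ G, x i)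
    + (k ^ F.card - k) / l

/-- The (ℓ,k)-symmetric system of a sequence. -/
def symSystem (l k : ℤ) (x : ℕ → ℤ) : Set ℤ :=
  {z : ℤ | ∃ F : Finset ℕ, F.Nonempty ∧ symVal l k x F = z}

/-- Every finite sum of a stream of positive naturals is positive. -/
lemma fs_pos : ∀ (a : Stream' ℕ) (n : ℕ), n ∈ Hindman.FS a → (∀ i, 0 < a.get i) → 0 < n := by
  intro a n hn
  induction hn with
  | head' a => exact fun ha => ha 0
  | tail' a m h ih => exact fun ha => ih (fun i => ha (i + 1))
  | cons' a m h ih =>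
      intro ha
      have := ih (fun i => ha (i + 1))
      have h0 := ha 0
      omega

/-- Product expansion: ∏ (l xᵢ + k) = k^|F| + l · (the main sum of `symVal`). -/
lemma prod_expand (l k : ℤ) (x : ℕ → ℤ) (F : Finset ℕ) :
    ∏ i ∈ F, (l * x i + k)
      = k ^ F.card + l * ∑ G ∈ F.powerset.filter (fun G => G ≠ ∅),
          l ^ (G.card - 1) * k ^ (F.card - G.card) * ∏ i ∈ G, x i := by
  rw [Finset.prod_add, Finset.mul_sum]
  have hemp : (∅ : Finset ℕ) ∈ F.powerset := Finset.empty_mem_powerset F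
  rw [← Finset.add_sum_erase _ _ hemp]
  congr 1
  · simp [Finset.prod_const]
  · rw [show F.powerset.filter (fun G => G ≠ ∅) = F.powerset.erase ∅ from Finset.filter_ne' _ _]
    apply Finset.sum_congr rfl
    intro t ht
    have ht' : t ≠ ∅ := Finset.ne_of_mem_erase ht
    have htF : t ⊆ F := Finset.mem_powerset.mp (Finset.mem_of_mem_erase ht)
    have hc : 1 ≤ t.card := Finset.card_pos.mpr (Finset.nonempty_of_ne_empty ht')
    have h1 : ∏ i ∈ t, (l * x i) = l ^ t.card * ∏ i ∈ t, x i := by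
      rw [Finset.prod_mul_distrib, Finset.prod_const]
    have h2 : ∏ _i ∈ F \ t, k = k ^ (F.card - t.card) := by
      rw [Finset.prod_const, Finset.card_sdiff_of_subset htF]
    rw [h1, h2]
    have h3 : l ^ t.card = l * l ^ (t.card - 1) := by
      conv_lhs => rw [show t.card = (t.card - 1) + 1 from (Nat.sub_add_cancel hc).symm]
      rw [pow_succ]; ring
    rw [h3]; ring

theorem symSystem_partition_regular_nat (l k : ℤ) (hl : 0 < l) (hdvd : l ∣ k * (k - 1))
    (r : ℕ) (C : Fin r → Set ℤ) (hC : (⋃ i, C i) = {z : ℤ | 0 < z}) :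
    ∃ x : ℕ → ℤ, Function.Injective x ∧ (∀ n : ℕ, 0 < x n) ∧
      ∃ i : Fin r, symSystem l k x ⊆ C i := by
  classical
  -- r > 0
  rcases Nat.eq_zero_or_pos r with hr | hr
  · exfalso
    have h1 : (1 : ℤ) ∈ ⋃ i, C i := by rw [hC]; exact Set.mem_setOf.mpr one_pos
    subst hr
    simp at h1
  -- the base m ≡ k mod l, m ≥ 2
  set m : ℤ := k + l * (k.natAbs + 2) with hm
  have hlk : (k.natAbs + 2 : ℤ) ≤ l * (k.natAbs + 2) :=
    le_mul_of_one_le_left (by positivity) hl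
  have hm2 : 2 ≤ m := by omega
  have hmk : k < m := by omega
  -- divisibility: l ∣ k^c - k for c ≥ 1
  have hLdvdK : ∀ c : ℕ, 1 ≤ c → l ∣ k ^ c - k := by
    intro c hc
    obtain ⟨d, rfl⟩ := Nat.exists_eq_add_of_le hc
    have h1 : k - 1 ∣ k ^ d - 1 := by simpa using sub_dvd_pow_sub_pow k 1 d
    have h2 : k * (k - 1) ∣ k * (k ^ d - 1) := mul_dvd_mul_left k h1
    have h3 : k * (k ^ d - 1) = k ^ (1 + d) - k := by rw [pow_add]; ring
    exact (hdvd.trans h2).trans (dvd_of_eq h3)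
  have hLdvdM : ∀ c : ℕ, 1 ≤ c → l ∣ m ^ c - k := by
    intro c hc
    have h1 : l ∣ m - k := ⟨(k.natAbs + 2 : ℤ), by rw [hm]; ring⟩
    have h2 : l ∣ m ^ c - k ^ c := h1.trans (sub_dvd_pow_sub_pow m k c)
    have h3 := dvd_add h2 (hLdvdK c hc)
    simpa using h3
  -- the candidate values
  set y : ℕ → ℤ := fun n => (m ^ n - k) / l with hy
  have hypos : ∀ n : ℕ, 1 ≤ n → 0 < y n := by
    intro n hn
    obtain ⟨d, hd⟩ := hLdvdM n hn
    have hmn : m ≤ m ^ n := le_self_pow₀ (by omega) (by omega)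
    have hpos : 0 < m ^ n - k := by omega
    have : y n = d := by rw [hy]; simp only; rw [hd, Int.mul_ediv_cancel_left _ hl.ne']
    rw [this]
    nlinarith [hd ▸ hpos]
  -- coloring of exponents
  set g : ℕ → Fin r := fun n =>
    if h : ∃ i, y n ∈ C i then h.choose else ⟨0, hr⟩ with hg
  have hgmem : ∀ n : ℕ, 1 ≤ n → y n ∈ C (g n) := by
    intro n hn
    have h1 : y n ∈ ⋃ i, C i := by rw [hC]; exact hypos n hn
    obtain ⟨s, ⟨i, rfl⟩, hs⟩ := h1
    have h : ∃ i, y n ∈ C i := ⟨i, hs⟩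
    simp only [hg, dif_pos h]
    exact h.choose_spec
  -- Hindman's theorem
  set a : Stream' ℕ := fun n => n + 1 with ha
  have hacov : Hindman.FS a ⊆ ⋃₀ Set.range (fun i : Fin r => {n : ℕ | g n = i ∧ 0 < n}) := by
    intro n hn
    have hpos : 0 < n := fs_pos a n hn (fun i => Nat.succ_pos i)
    exact ⟨_, ⟨g n, rfl⟩, rfl, hpos⟩
  obtain ⟨c, ⟨i, rfl⟩, b, hb⟩ :=
    Hindman.FS_partition_regular a _ (Set.finite_range _) hacov
  -- entries of b are positive
  have hbpos : ∀ n : ℕ, 1 ≤ b.get n := fun n => (hb (Hindman.FS.singleton b n)).2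
  -- block sums giving a strictly increasing sequence whose finite sums are finite sums of b
  set T : ℕ → ℕ := fun n =>
    Nat.rec 0 (fun _ Tn => Tn + 1 + ∑ i ∈ Finset.range Tn, b.get i) n with hT
  have hTsucc : ∀ n, T (n + 1) = T n + 1 + ∑ i ∈ Finset.range (T n), b.get i := fun n => rfl
  have hTlt : ∀ n, T n < T (n + 1) := by intro n; rw [hTsucc]; omega
  have hTmono : StrictMono T := strictMono_nat_of_lt_succ hTlt
  set B : ℕ → ℕ := fun n => ∑ i ∈ Finset.Ico (T n) (T (n + 1)), b.get i with hB
  have hBge : ∀ n, T (n + 1) - T n ≤ B n := by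
    intro n
    have := Finset.card_nsmul_le_sum (Finset.Ico (T n) (T (n + 1))) (fun i => b.get i) 1
      (fun i _ => hbpos i)
    simpa [Nat.card_Ico] using this
  have hB1 : ∀ n, 1 ≤ B n := by
    intro n
    have h := hBge n
    have := hTlt n
    omega
  have hBmono : StrictMono B := by
    apply strictMono_nat_of_lt_succ
    intro n
    have h1 : B n ≤ ∑ i ∈ Finset.range (T (n + 1)), b.get i := by
      apply Finset.sum_le_sum_of_subset
      intro x hx
      simp only [Finset.mem_Ico] at hx
      simp only [Finset.mem_range]
      exact hx.2
    have h2 := hBge (n + 1)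
    rw [hTsucc (n + 1)] at h2
    omega
  -- finite sums of B are finite sums of b
  have hBsum : ∀ F : Finset ℕ, F.Nonempty → (∑ n ∈ F, B n) ∈ Hindman.FS b := by
    intro F hF
    have hdisj : (F : Set ℕ).PairwiseDisjoint (fun n => Finset.Ico (T n) (T (n + 1))) := by
      intro u _ v _ huv
      rcases lt_or_gt_of_ne huv with h | h
      · apply Finset.disjoint_left.mpr
        intro x hx hx'
        simp only [Finset.mem_Ico] at hx hx'
        have : T (u + 1) ≤ T v := hTmono.le_iff_le.mpr h
        omega
      · apply Finset.disjoint_left.mpr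
        intro x hx hx'
        simp only [Finset.mem_Ico] at hx hx'
        have : T (v + 1) ≤ T u := hTmono.le_iff_le.mpr h
        omega
    have hsum : ∑ n ∈ F, B n
        = ∑ i ∈ F.biUnion (fun n => Finset.Ico (T n) (T (n + 1))), b.get i :=
      (Finset.sum_biUnion hdisj).symm
    rw [hsum]
    apply Hindman.FS.finset_sum
    obtain ⟨n, hn⟩ := hF
    exact ⟨T n, Finset.mem_biUnion.mpr ⟨n, hn, Finset.mem_Ico.mpr ⟨le_refl _, hTlt n⟩⟩⟩
  -- the sequence x
  set x : ℕ → ℤ := fun n => y (B n) with hx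
  have hlx : ∀ n, l * x n + k = m ^ (B n) := by
    intro n
    have := Int.mul_ediv_cancel' (hLdvdM (B n) (hB1 n))
    simp only [hx, hy]
    omega
  have hxpos : ∀ n, 0 < x n := fun n => hypos (B n) (hB1 n)
  have hminj : Function.Injective (fun n : ℕ => m ^ n) := by
    have : StrictMono (fun n : ℕ => m ^ n) := fun p q hpq =>
      pow_lt_pow_right₀ (by omega) hpq
    exact this.injective
  have hxinj : Function.Injective x := by
    intro p q hpq
    apply hBmono.injective
    apply hminj
    have h1 := hlx p
    have h2 := hlx q
    simp only at h1 h2 ⊢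
    rw [← h1, ← h2, hpq]
  refine ⟨x, hxinj, hxpos, i, ?_⟩
  rintro z ⟨F, hF, rfl⟩
  -- compute symVal
  set S : ℕ := ∑ n ∈ F, B n with hS
  have hS1 : 1 ≤ S := by
    obtain ⟨n, hn⟩ := hF
    have : B n ≤ S := Finset.single_le_sum (fun _ _ => Nat.zero_le _) hn
    have := hB1 n
    omega
  have hFc : 1 ≤ F.card := Finset.card_pos.mpr hF
  have hprod : ∏ n ∈ F, (l * x n + k) = m ^ S := by
    rw [Finset.prod_congr rfl (fun n _ => hlx n), Finset.prod_pow_eq_pow_sum]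
  have hkey : l * symVal l k x F = m ^ S - k := by
    rw [symVal, mul_add, Int.mul_ediv_cancel' (hLdvdK F.card hFc), ← hprod, prod_expand]
    ring
  have hval : symVal l k x F = y S := by
    have : y S = (l * symVal l k x F) / l := by rw [hkey]
    rw [this, Int.mul_ediv_cancel_left _ hl.ne']
  have hSmem := hb (hBsum F hF)
  obtain ⟨hgi, hSpos⟩ := hSmem
  rw [hval, ← hgi]
  exact hgmem S hS1
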